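/- Let L be an n×n CB matrix. Then every entry of the adjugate matrix adj(L) is non-negative. -/

import Mathlib

open Finset

/-- A critical binomial (CB) matrix. -/
def IsCB (n : ℕ) (L : Matrix (Fin n) (Fin n) ℤ) : Prop :=
  (∀ i, 0 < L i i) ∧ (∀ i j : Fin n, i ≠ j → L i j ≤ 0) ∧ (∀ i, ∑ j, L i j = 0) ∧
    (∀ j, ∃ i, i ≠ j ∧ L i j ≠ 0)

/-- Min-entry argument: for a strictly row-dominant Z-matrix, `A *ᵥ x ≥ 0` implies `x ≥ 0`. -/
lemma cb_key {n : ℕ} (hn : 0 < n) (A : Matrix (Fin n) (Fin n) ℝ) (x : Fin n → ℝ)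
    (hd : ∀ i j, i ≠ j → A i j ≤ 0) (hs : ∀ i, 0 < ∑ j, A i j)
    (hb : ∀ i, 0 ≤ ∑ k, A i k * x k) : ∀ j, 0 ≤ x j := by
  have : Nonempty (Fin n) := ⟨⟨0, hn⟩⟩
  obtain ⟨i₀, -, hmin⟩ := Finset.exists_min_image Finset.univ x ⟨Classical.arbitrary _, mem_univ _⟩
  have hmin' : ∀ j, x i₀ ≤ x j := fun j => hmin j (mem_univ _)
  have h0 : 0 ≤ x i₀ := by
    by_contra hneg
    push_neg at hneg
    have hle : ∑ k, A i₀ k * x k ≤ ∑ k, A i₀ k * x i₀ := by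
      apply Finset.sum_le_sum
      intro k _
      rcases eq_or_ne k i₀ with rfl | hk
      · exact le_rfl
      · exact mul_le_mul_of_nonpos_left (hmin' k) (hd i₀ k (Ne.symm hk))
    rw [← Finset.sum_mul] at hle
    have : ∑ k, A i₀ k * x k < 0 :=
      lt_of_le_of_lt hle (mul_neg_of_pos_of_neg (hs i₀) hneg)
    exact absurd (hb i₀) (not_le.mpr this)
  exact fun j => h0.trans (hmin' j)


/-- A strictly row-dominant Z-matrix has nonzero determinant. -/
lemma cb_det_ne_zero {n : ℕ} (hn : 0 < n) (A : Matrix (Fin n) (Fin n) ℝ)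
    (hd : ∀ i j, i ≠ j → A i j ≤ 0) (hs : ∀ i, 0 < ∑ j, A i j) : A.det ≠ 0 := by
  intro h
  obtain ⟨v, hv, hAv⟩ := Matrix.exists_mulVec_eq_zero_iff.mpr h
  have hb : ∀ i, ∑ k, A i k * v k = 0 := by
    intro i
    have := congrFun hAv i
    simpa [Matrix.mulVec, dotProduct] using this
  have h1 : ∀ j, 0 ≤ v j := cb_key hn A v hd hs (fun i => (hb i).ge)
  have h2 : ∀ j, 0 ≤ -v j := by
    refine cb_key hn A (-v) hd hs (fun i => ?_)
    have : ∑ k, A i k * (-v) k = -∑ k, A i k * v k := by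
      simp [Finset.sum_neg_distrib, mul_neg]
    rw [this, hb i]
    simp
  exact hv (funext fun j => le_antisymm (by simpa using h2 j) (h1 j))

/-- Nonnegative adjugate for strictly row-dominant Z-matrices with positive determinant. -/
lemma cb_adj_nonneg {n : ℕ} (hn : 0 < n) (A : Matrix (Fin n) (Fin n) ℝ)
    (hd : ∀ i j, i ≠ j → A i j ≤ 0) (hs : ∀ i, 0 < ∑ j, A i j) (hdet : 0 < A.det) :
    ∀ i j, 0 ≤ A.adjugate i j := by
  intro i j
  refine cb_key hn A (fun k => A.adjugate k j) hd hs (fun i' => ?_) i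
  have : ∑ k, A i' k * A.adjugate k j = (A * A.adjugate) i' j := by
    rw [Matrix.mul_apply]
  rw [this, Matrix.mul_adjugate]
  rcases eq_or_ne i' j with rfl | hne
  · simp [hdet.le]
  · simp [Matrix.one_apply_ne hne]


lemma cb_perturb_off {n : ℕ} (M : Matrix (Fin n) (Fin n) ℝ)
    (hd : ∀ i j, i ≠ j → M i j ≤ 0) (t : ℝ) :
    ∀ i j, i ≠ j → (M + t • (1 : Matrix (Fin n) (Fin n) ℝ)) i j ≤ 0 := by
  intro i j hij
  simp [Matrix.add_apply, Matrix.smul_apply, Matrix.one_apply_ne hij, hd i j hij]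

lemma cb_perturb_sum {n : ℕ} (M : Matrix (Fin n) (Fin n) ℝ)
    (hs : ∀ i, ∑ j, M i j = 0) {t : ℝ} (ht : 0 < t) :
    ∀ i, 0 < ∑ j, (M + t • (1 : Matrix (Fin n) (Fin n) ℝ)) i j := by
  intro i
  have : ∑ j, (M + t • (1 : Matrix (Fin n) (Fin n) ℝ)) i j
      = (∑ j, M i j) + t * ∑ j, (1 : Matrix (Fin n) (Fin n) ℝ) i j := by
    rw [Finset.mul_sum, ← Finset.sum_add_distrib]
    simp [Matrix.add_apply, Matrix.smul_apply, smul_eq_mul]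
  rw [this, hs i]
  have h1 : ∑ j, (1 : Matrix (Fin n) (Fin n) ℝ) i j = 1 := by
    simp [Matrix.one_apply]
  rw [h1]
  linarith

/-- Determinant positivity along the perturbation. -/
lemma cb_det_pos {n : ℕ} (hn : 0 < n) (M : Matrix (Fin n) (Fin n) ℝ)
    (hd : ∀ i j, i ≠ j → M i j ≤ 0) (hs : ∀ i, ∑ j, M i j = 0) :
    ∀ t : ℝ, 0 < t → 0 < (M + t • (1 : Matrix (Fin n) (Fin n) ℝ)).det := by
  set g : ℝ → ℝ := fun t => (M + t • (1 : Matrix (Fin n) (Fin n) ℝ)).det with hg_def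
  have hg : Continuous g := by
    apply Continuous.matrix_det
    exact continuous_const.add (continuous_id.smul continuous_const)
  have hne : ∀ t : ℝ, 0 < t → g t ≠ 0 := fun t ht =>
    cb_det_ne_zero hn _ (cb_perturb_off M hd t) (cb_perturb_sum M hs ht)
  -- find some T > 0 with g T > 0
  have hcont2 : Continuous fun s : ℝ => (s • M + (1 : Matrix (Fin n) (Fin n) ℝ)).det := by
    apply Continuous.matrix_det
    exact (continuous_id.smul continuous_const).add continuous_const
  have hval : ((0:ℝ) • M + (1 : Matrix (Fin n) (Fin n) ℝ)).det = 1 := by simp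
  have hev : ∀ᶠ s in nhds (0:ℝ), 0 < (s • M + (1 : Matrix (Fin n) (Fin n) ℝ)).det := by
    have := (hcont2.tendsto 0)
    rw [hval] at this
    exact this.eventually (eventually_gt_nhds one_pos)
  have hev' : ∀ᶠ s in nhdsWithin (0:ℝ) (Set.Ioi 0),
      0 < (s • M + (1 : Matrix (Fin n) (Fin n) ℝ)).det ∧ s ∈ Set.Ioi (0:ℝ) :=
    (hev.filter_mono nhdsWithin_le_nhds).and self_mem_nhdsWithin
  obtain ⟨s, hsdet, hs0⟩ := hev'.exists
  have hs0' : (0:ℝ) < s := hs0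
  set T : ℝ := s⁻¹ with hT_def
  have hT0 : 0 < T := inv_pos.mpr hs0'
  have hgT : 0 < g T := by
    have hMeq : M + T • (1 : Matrix (Fin n) (Fin n) ℝ)
        = T • (s • M + (1 : Matrix (Fin n) (Fin n) ℝ)) := by
      rw [smul_add, smul_smul, hT_def, inv_mul_cancel₀ hs0'.ne', one_smul]
    rw [hg_def]
    simp only
    rw [hMeq, Matrix.det_smul]
    positivity
  -- now IVT
  intro t ht
  rcases lt_or_ge 0 (g t) with h | h
  · exact h
  have hgt : g t < 0 := lt_of_le_of_ne h (hne t ht)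
  have h0mem : (0:ℝ) ∈ Set.uIcc (g t) (g T) :=
    Set.mem_uIcc.mpr (Or.inl ⟨hgt.le, hgT.le⟩)
  obtain ⟨u, hu, hgu⟩ := intermediate_value_uIcc (hg.continuousOn (s := Set.uIcc t T)) h0mem
  have hu0 : 0 < u := by
    rcases Set.mem_uIcc.mp hu with ⟨h1, _⟩ | ⟨h1, _⟩
    · exact lt_of_lt_of_le ht h1
    · exact lt_of_lt_of_le hT0 h1
  exact absurd hgu (hne u hu0)

theorem adjugate_nonneg_of_isCB (n : ℕ) (hn : 3 ≤ n)
    (L : Matrix (Fin n) (Fin n) ℤ) (hL : IsCB n L) :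
    ∀ i j : Fin n, 0 ≤ L.adjugate i j := by
  obtain ⟨hdiag, hoff, hsum, -⟩ := hL
  have hn0 : 0 < n := by omega
  set M : Matrix (Fin n) (Fin n) ℝ := L.map (Int.cast : ℤ → ℝ) with hM_def
  have hd : ∀ i j, i ≠ j → M i j ≤ 0 := by
    intro i j hij
    simpa [hM_def, Matrix.map_apply] using (Int.cast_nonpos.mpr (hoff i j hij) : ((L i j : ℤ) : ℝ) ≤ 0)
  have hs : ∀ i, ∑ j, M i j = 0 := by
    intro i
    have := hsum i
    simp only [hM_def, Matrix.map_apply]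
    exact_mod_cast congrArg (fun z : ℤ => (z : ℝ)) this
  -- adjugate of the perturbed matrix is nonneg for every t > 0
  have hadj : ∀ t : ℝ, 0 < t →
      ∀ i j, 0 ≤ (M + t • (1 : Matrix (Fin n) (Fin n) ℝ)).adjugate i j := fun t ht =>
    cb_adj_nonneg hn0 _ (cb_perturb_off M hd t) (cb_perturb_sum M hs ht)
      (cb_det_pos hn0 M hd hs t ht)
  intro i j
  -- pass to the limit t → 0⁺
  have hcont : Continuous fun t : ℝ =>
      (M + t • (1 : Matrix (Fin n) (Fin n) ℝ)).adjugate i j := by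
    have : Continuous fun t : ℝ => (M + t • (1 : Matrix (Fin n) (Fin n) ℝ)).adjugate :=
      (continuous_const.add (continuous_id.smul continuous_const)).matrix_adjugate
    exact (continuous_apply j).comp ((continuous_apply i).comp this)
  have htend : Filter.Tendsto (fun t : ℝ =>
      (M + t • (1 : Matrix (Fin n) (Fin n) ℝ)).adjugate i j)
      (nhdsWithin 0 (Set.Ioi 0)) (nhds (M.adjugate i j)) := by
    have h0 : (M + (0:ℝ) • (1 : Matrix (Fin n) (Fin n) ℝ)).adjugate i j
        = M.adjugate i j := by simp
    have := (hcont.tendsto 0).mono_left (nhdsWithin_le_nhds (s := Set.Ioi (0:ℝ)))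
    rwa [h0] at this
  have hlim : 0 ≤ M.adjugate i j := by
    refine ge_of_tendsto htend ?_
    filter_upwards [self_mem_nhdsWithin] with t ht
    exact hadj t ht i j
  -- transfer back to ℤ
  have hmap : M.adjugate = (L.adjugate).map (Int.cast : ℤ → ℝ) := by
    have := RingHom.map_adjugate (Int.castRingHom ℝ) L
    simpa [hM_def, RingHom.mapMatrix_apply] using this.symm
  rw [hmap, Matrix.map_apply] at hlim
  exact_mod_cast hlim
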